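/- Let H be a connected solvable complex linear algebraic group with a principal integrable b(sl₂)-pair (e,h), where h integrates to a one-parameter subgroup H^t satisfying Ad_{H^t}(e) = t²e. Then every element of the affine subspace e + t (with t = Lie of the maximal torus containing h) is a regular element of h = Lie(H), and no two distinct elements of e + t are conjugate under H. -/

import Mathlib

open Module LinearMap Polynomial

/-- **Elements of `e + t` are regular and pairwise non-conjugate.**
Let `H` be a connected solvable complex linear algebraic group with Lie algebra
`L = t ⊕ hn` (`t` the Lie algebra of the maximal torus, `hn` the nilpotent part,
an ideal containing all brackets), acting on `L` by the adjoint representation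
`Ad` (a group homomorphism into Lie algebra automorphisms with
`Ad g x - x ∈ hn` for all `g`).  Let `(e, h)` be a principal integrable
`𝔟(𝔰𝔩₂)`-pair: `e ∈ hn` is a regular nilpotent and `h` integrates to a
one-parameter subgroup `H s` with `Ad (H s) e = s² • e`, fixing `t` pointwise.
Then every element of `e + t` is regular in `L` (its centraliser has dimension
`dim t`), and no two distinct elements of `e + t` are conjugate under `H`. -/
theorem stmt_8 {L : Type} [LieRing L] [LieAlgebra ℂ L] [FiniteDimensional ℂ L]
    (t hn : Submodule ℂ L) (hcompl : IsCompl t hn)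
    (hbrack : ∀ x y : L, ⁅x, y⁆ ∈ hn)
    {G : Type} [Group G] (Ad : G →* (L ≃ₗ[ℂ] L))
    (hAdLie : ∀ g : G, ∀ x y : L, Ad g ⁅x, y⁆ = ⁅Ad g x, Ad g y⁆)
    (hAdn : ∀ g : G, ∀ x : L, Ad g x - x ∈ hn)
    (e : L) (he : e ∈ hn)
    (hereg : Module.finrank ℂ (LinearMap.ker (LieAlgebra.ad ℂ L e)) = Module.finrank ℂ t)
    (H : ℂˣ → G) (hHmul : ∀ s s' : ℂˣ, H (s * s') = H s * H s')
    (hHe : ∀ s : ℂˣ, Ad (H s) e = ((s : ℂ) ^ 2) • e)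
    (hHt : ∀ s : ℂˣ, ∀ w ∈ t, Ad (H s) w = w) :
    (∀ w ∈ t,
      Module.finrank ℂ (LinearMap.ker (LieAlgebra.ad ℂ L (e + w))) = Module.finrank ℂ t) ∧
    (∀ w ∈ t, ∀ w' ∈ t, (∃ g : G, Ad g (e + w) = e + w') → w = w') := by
  classical
  have hdim : finrank ℂ t + finrank ℂ hn = finrank ℂ L :=
    Submodule.finrank_add_eq_of_isCompl hcompl
  -- lower bound: any `ad y` has range inside `hn`, so its kernel has dim ≥ dim t
  have lower : ∀ y : L,
      finrank ℂ t ≤ finrank ℂ (LinearMap.ker (LieAlgebra.ad ℂ L y)) := by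
    intro y
    have hrange : LinearMap.range (LieAlgebra.ad ℂ L y) ≤ hn := by
      rintro - ⟨x, rfl⟩
      exact hbrack y x
    have h1 : finrank ℂ (LinearMap.range (LieAlgebra.ad ℂ L y)) ≤ finrank ℂ hn :=
      Submodule.finrank_mono hrange
    have h2 := (LieAlgebra.ad ℂ L y).finrank_range_add_finrank_ker
    omega
  -- conjugation invariance of centraliser dimension
  have conj : ∀ (g : G) (y : L),
      finrank ℂ (LinearMap.ker (LieAlgebra.ad ℂ L (Ad g y)))
        = finrank ℂ (LinearMap.ker (LieAlgebra.ad ℂ L y)) := by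
    intro g y
    have hker : LinearMap.ker (LieAlgebra.ad ℂ L (Ad g y))
        = Submodule.map ((Ad g : L ≃ₗ[ℂ] L) : L →ₗ[ℂ] L)
            (LinearMap.ker (LieAlgebra.ad ℂ L y)) := by
      ext x
      simp only [LinearMap.mem_ker, Submodule.mem_map, LieAlgebra.ad_apply,
        LinearEquiv.coe_coe]
      constructor
      · intro hx
        refine ⟨(Ad g).symm x, ?_, (Ad g).apply_symm_apply x⟩
        have : Ad g ⁅y, (Ad g).symm x⁆ = 0 := by
          rw [hAdLie g y ((Ad g).symm x), (Ad g).apply_symm_apply]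
          exact hx
        have h0 : Ad g ⁅y, (Ad g).symm x⁆ = Ad g 0 := by rw [this, map_zero]
        exact (Ad g).injective h0
      · rintro ⟨z, hz, rfl⟩
        rw [← hAdLie g y z, hz, map_zero]
    rw [hker, LinearEquiv.finrank_map_eq]
  constructor
  · -- regularity of every element of `e + t`
    intro w hw
    -- choose a complement `Cc` to the centraliser of `e`
    obtain ⟨Cc, hCc⟩ := Submodule.exists_isCompl (LinearMap.ker (LieAlgebra.ad ℂ L e))
    have hCcdim : finrank ℂ (LinearMap.ker (LieAlgebra.ad ℂ L e)) + finrank ℂ Cc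
        = finrank ℂ L := Submodule.finrank_add_eq_of_isCompl hCc
    have hCcn : finrank ℂ Cc = finrank ℂ hn := by omega
    -- `ad e` restricted to the complement, corestricted to `hn`, is an isomorphism
    have hmemA : ∀ x : Cc, (LieAlgebra.ad ℂ L e).comp Cc.subtype x ∈ hn := by
      intro x; exact hbrack e x
    set A : Cc →ₗ[ℂ] hn :=
      LinearMap.codRestrict hn ((LieAlgebra.ad ℂ L e).comp Cc.subtype) hmemA with hA
    have hAinj : Function.Injective A := by
      rw [← LinearMap.ker_eq_bot, eq_bot_iff]
      rintro x hx
      have hx' : (x : L) ∈ LinearMap.ker (LieAlgebra.ad ℂ L e) := by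
        have : (A x : L) = 0 := by
          rw [LinearMap.mem_ker] at hx
          rw [hx]; rfl
        simpa [hA, LinearMap.codRestrict] using this
      have : (x : L) ∈ (LinearMap.ker (LieAlgebra.ad ℂ L e)) ⊓ Cc := ⟨hx', x.2⟩
      rw [hCc.inf_eq_bot] at this
      simpa [Submodule.mem_bot, Submodule.coe_eq_zero] using this
    have hAsurj : Function.Surjective A :=
      (LinearMap.injective_iff_surjective_of_finrank_eq_finrank hCcn).mp hAinj
    set E : Cc ≃ₗ[ℂ] hn := LinearEquiv.ofBijective A ⟨hAinj, hAsurj⟩ with hE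
    -- `ad w` similarly
    have hmemB : ∀ x : Cc, (LieAlgebra.ad ℂ L w).comp Cc.subtype x ∈ hn := by
      intro x; exact hbrack w x
    set B : Cc →ₗ[ℂ] hn :=
      LinearMap.codRestrict hn ((LieAlgebra.ad ℂ L w).comp Cc.subtype) hmemB with hB
    set K0 : Cc →ₗ[ℂ] Cc := (E.symm : hn →ₗ[ℂ] Cc).comp B with hK0
    -- determinant polynomial
    set b := Module.finBasis ℂ Cc with hb
    set M := LinearMap.toMatrixAlgEquiv b K0 with hM
    set Q : ℂ[X] := (1 + (X : ℂ[X]) • M.map Polynomial.C).det with hQ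
    have hQeval : ∀ u : ℂ, Q.eval u = (1 + u • M).det := by
      intro u
      have h1 : Q.eval u = Polynomial.evalRingHom u Q := rfl
      rw [h1, hQ, RingHom.map_det]
      congr 1
      ext i j
      by_cases hij : i = j <;>
        simp [Matrix.map_apply, Matrix.add_apply, Matrix.smul_apply, Matrix.one_apply,
          hij, smul_eq_mul] <;> ring
    have hQne : Q ≠ 0 := by
      intro h0
      have := hQeval 0
      rw [h0] at this
      simp at this
    -- choose `u` avoiding the roots of `Q` and `0`
    have hfin : ({ x | Polynomial.IsRoot Q x } ∪ {0}).Finite :=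
      (Polynomial.finite_setOf_isRoot hQne).union (Set.finite_singleton 0)
    obtain ⟨u, hu⟩ := hfin.infinite_compl.nonempty
    have hu0 : u ≠ 0 := by
      intro h; exact hu (Or.inr (by simp [h]))
    have hQu : Q.eval u ≠ 0 := fun h => hu (Or.inl h)
    -- `id + u • K0` is injective
    set Nu : Cc →ₗ[ℂ] Cc := LinearMap.id + u • K0 with hNu
    have hNudet : (LinearMap.toMatrixAlgEquiv b Nu).det ≠ 0 := by
      have : LinearMap.toMatrixAlgEquiv b Nu = 1 + u • M := by
        rw [hNu, map_add, map_smul, LinearMap.toMatrixAlgEquiv_id, hM]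
      rw [this, ← hQeval]
      exact hQu
    have hNuunit : IsUnit Nu := by
      have h1 : IsUnit (LinearMap.toMatrixAlgEquiv b Nu) :=
        (Matrix.isUnit_iff_isUnit_det _).mpr (isUnit_iff_ne_zero.mpr hNudet)
      have h2 := h1.map (LinearMap.toMatrixAlgEquiv b).symm.toRingEquiv.toRingHom
      simpa using h2
    have hNuinj : Function.Injective Nu := by
      rw [← LinearMap.ker_eq_bot]
      exact (LinearMap.isUnit_iff_ker_eq_bot Nu).mp hNuunit
    -- the kernel of `ad (e + u • w)` is disjoint from `Cc`
    have hkey : ∀ x : Cc,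
        LieAlgebra.ad ℂ L (e + u • w) (x : L) = ((E (Nu x) : hn) : L) := by
      intro x
      have hAx : (A x : L) = ⁅e, (x : L)⁆ := rfl
      have hBx : (B x : L) = ⁅w, (x : L)⁆ := rfl
      have hEK : E (K0 x) = B x := by
        rw [hK0]
        exact E.apply_symm_apply (B x)
      have hENu : E (Nu x) = A x + u • B x := by
        have hadd : E (x + u • K0 x) = E x + u • E (K0 x) := by
          rw [map_add, map_smul]
        rw [hNu]
        simp only [LinearMap.add_apply, LinearMap.id_apply, LinearMap.smul_apply]
        rw [hadd, hEK]
        rfl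
      rw [hENu]
      push_cast
      rw [hAx, hBx]
      simp [LieAlgebra.ad_apply, add_lie, smul_lie]
    have hdisj : LinearMap.ker (LieAlgebra.ad ℂ L (e + u • w)) ⊓ Cc = ⊥ := by
      rw [eq_bot_iff]
      rintro x ⟨hx1, hx2⟩
      have hx0 : LieAlgebra.ad ℂ L (e + u • w) x = 0 := hx1
      have hx' := hkey ⟨x, hx2⟩
      rw [show ((⟨x, hx2⟩ : Cc) : L) = x from rfl, hx0] at hx'
      have h0 : E (Nu ⟨x, hx2⟩) = 0 := by
        apply Subtype.ext
        exact hx'.symm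
      have h1 : Nu ⟨x, hx2⟩ = 0 := by
        apply E.injective
        rw [h0, map_zero]
      have h2 : (⟨x, hx2⟩ : Cc) = 0 := by
        apply hNuinj
        rw [h1, map_zero]
      have := congrArg (Subtype.val) h2
      simpa using this
    -- hence the kernel of `ad (e + u • w)` has dim ≤ dim t
    have hupper : finrank ℂ (LinearMap.ker (LieAlgebra.ad ℂ L (e + u • w)))
        ≤ finrank ℂ t := by
      have hsup := Submodule.finrank_sup_add_finrank_inf_eq
        (LinearMap.ker (LieAlgebra.ad ℂ L (e + u • w))) Cc
      rw [hdisj] at hsup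
      have hle : finrank ℂ
          ((LinearMap.ker (LieAlgebra.ad ℂ L (e + u • w)) ⊔ Cc : Submodule ℂ L))
          ≤ finrank ℂ L := Submodule.finrank_le _
      simp only [finrank_bot, add_zero] at hsup
      omega
    -- transport along the one-parameter subgroup: pick `s` with `s² = u⁻¹`
    obtain ⟨s, hs⟩ := IsAlgClosed.exists_pow_nat_eq (u⁻¹ : ℂ) (n := 2) (by norm_num)
    have hsne : s ≠ 0 := by
      intro h
      rw [h] at hs
      simp [inv_eq_zero] at hs
      exact hu0 hs.symm
    set su : ℂˣ := Units.mk0 s hsne with hsu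
    have hsq : (s : ℂ) ^ 2 * u = 1 := by rw [hs]; field_simp
    have h1 : Ad (H su) (e + w) = (s ^ 2) • (e + u • w) := by
      rw [map_add, hHe su, hHt su w hw]
      rw [smul_add, smul_smul, hsq, one_smul]
      rfl
    have h2 : finrank ℂ (LinearMap.ker (LieAlgebra.ad ℂ L ((s ^ 2) • (e + u • w))))
        = finrank ℂ (LinearMap.ker (LieAlgebra.ad ℂ L (e + u • w))) := by
      rw [map_smul, LinearMap.ker_smul _ _ (pow_ne_zero 2 hsne)]
    have h3 := conj (H su) (e + w)
    rw [h1, h2] at h3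
    exact le_antisymm (h3 ▸ hupper) (lower (e + w))
  · -- non-conjugacy
    intro w hw w' hw' ⟨g, hg⟩
    have h1 : Ad g (e + w) - (e + w) ∈ hn := hAdn g (e + w)
    rw [hg] at h1
    have h2 : (e + w') - (e + w) = w' - w := by abel
    rw [h2] at h1
    have h3 : w' - w ∈ t := Submodule.sub_mem t hw' hw
    have h4 : w' - w ∈ t ⊓ hn := ⟨h3, h1⟩
    rw [hcompl.inf_eq_bot] at h4
    have : w' - w = 0 := h4
    exact (sub_eq_zero.mp this).symm
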